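/- arXiv:2306.17687 — 3 statements merged into one kernel-verified Lean document; each statement's English description precedes it below -/
import Mathlib

section
/- Let Ξ be a Hausdorff locally compact abelian group which is not compact. Then for every ψ ∈ VO(Ξ) and every λ ∈ ⋂_{K ⊆ Ξ compact} closure(ψ(Ξ∖K)), there exists a unital ℂ-algebra homomorphism σ : VO(Ξ) → ℂ such that σ(φ) = 0 for every φ ∈ C_0(Ξ) and σ(ψ) = λ. (Every value of ψ clustering at infinity is attained by a character of VO(Ξ) lying in the corona.) -/
open Filter

noncomputable section

/-- Bounded uniformly continuous complex functions on a uniform space. -/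
def BCu {Ξ : Type*} [UniformSpace Ξ] (ψ : Ξ → ℂ) : Prop :=
  Bornology.IsBounded (Set.range ψ) ∧ UniformContinuous ψ

/-- Continuous complex functions vanishing at infinity. -/
def C0 {Ξ : Type*} [TopologicalSpace Ξ] (φ : Ξ → ℂ) : Prop :=
  Continuous φ ∧ Tendsto φ (cocompact Ξ) (nhds 0)

/-- Translation of a function on a (multiplicative) abelian group: `(τ η ψ)(ξ) = ψ(ξη)`. -/
def tau {Ξ : Type*} [CommGroup Ξ] (η : Ξ) (ψ : Ξ → ℂ) : Ξ → ℂ :=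
  fun ξ => ψ (ξ * η)

/-- Vanishing oscillation functions on `Ξ`. -/
def VO {Ξ : Type*} [CommGroup Ξ] [UniformSpace Ξ] (ψ : Ξ → ℂ) : Prop :=
  BCu ψ ∧ ∀ ζ : Ξ, C0 (fun ξ => ψ (ξ * ζ) - ψ ξ)

theorem cluster_value_attained_by_corona_character
    (Ξ : Type*) [CommGroup Ξ] [UniformSpace Ξ] [IsUniformGroup Ξ]
    [LocallyCompactSpace Ξ] [T2Space Ξ]
    (hnc : ¬ CompactSpace Ξ)
    (ψ : Ξ → ℂ) (hψ : VO ψ)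
    (lam : ℂ)
    (hlam : ∀ K : Set Ξ, IsCompact K → lam ∈ closure (ψ '' Kᶜ)) :
    ∃ σ : (Ξ → ℂ) → ℂ,
      (∀ ψ₁ ψ₂, VO ψ₁ → VO ψ₂ → σ (ψ₁ + ψ₂) = σ ψ₁ + σ ψ₂) ∧
      (∀ (c : ℂ) ψ₁, VO ψ₁ → σ (c • ψ₁) = c * σ ψ₁) ∧
      (∀ ψ₁ ψ₂, VO ψ₁ → VO ψ₂ → σ (ψ₁ * ψ₂) = σ ψ₁ * σ ψ₂) ∧
      σ 1 = 1 ∧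
      (∀ φ : Ξ → ℂ, C0 φ → σ φ = 0) ∧
      σ ψ = lam := by

  classical
  set F : Filter Ξ := cocompact Ξ ⊓ comap ψ (nhds lam) with hF
  have hbasis := (hasBasis_cocompact (X := Ξ)).inf ((nhds lam).basis_sets.comap ψ)
  have hne : F.NeBot := by
    rw [hbasis.neBot_iff]
    rintro ⟨K, s⟩ ⟨hK, hs⟩
    have h := hlam K hK
    rw [mem_closure_iff_nhds] at h
    obtain ⟨x, hxs, ξ, hξK, rfl⟩ := h s hs
    exact ⟨ξ, hξK, hxs⟩
  let U : Ultrafilter Ξ := Ultrafilter.of F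
  have hUF : (U : Filter Ξ) ≤ F := Ultrafilter.of_le F
  have hUc : (U : Filter Ξ) ≤ cocompact Ξ := hUF.trans inf_le_left
  have hUψ : Tendsto ψ (U : Filter Ξ) (nhds lam) := by
    rw [tendsto_iff_comap]; exact hUF.trans inf_le_right
  have key : ∀ f : Ξ → ℂ, VO f → ∃ z, Tendsto f (U : Filter Ξ) (nhds z) := by
    intro f hf
    have hc : IsCompact (closure (Set.range f)) :=
      Metric.isCompact_of_isClosed_isBounded isClosed_closure hf.1.1.closure
    have hmem : closure (Set.range f) ∈ Ultrafilter.map f U := by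
      apply mem_map.2
      filter_upwards with x using subset_closure (Set.mem_range_self x)
    obtain ⟨z, _, hle⟩ := hc.ultrafilter_le_nhds (Ultrafilter.map f U)
      (le_principal_iff.2 hmem)
    exact ⟨z, hle⟩
  refine ⟨fun f => limUnder (U : Filter Ξ) f, ?_, ?_, ?_, ?_, ?_, ?_⟩
  · intro ψ₁ ψ₂ h₁ h₂
    obtain ⟨z₁, hz₁⟩ := key ψ₁ h₁
    obtain ⟨z₂, hz₂⟩ := key ψ₂ h₂
    beta_reduce
    rw [hz₁.limUnder_eq, hz₂.limUnder_eq]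
    exact (hz₁.add hz₂).limUnder_eq
  · intro c ψ₁ h₁
    obtain ⟨z₁, hz₁⟩ := key ψ₁ h₁
    have : Tendsto (c • ψ₁) (U : Filter Ξ) (nhds (c * z₁)) := by
      exact hz₁.const_mul c
    beta_reduce
    rw [hz₁.limUnder_eq, this.limUnder_eq]
  · intro ψ₁ ψ₂ h₁ h₂
    obtain ⟨z₁, hz₁⟩ := key ψ₁ h₁
    obtain ⟨z₂, hz₂⟩ := key ψ₂ h₂
    beta_reduce
    rw [hz₁.limUnder_eq, hz₂.limUnder_eq]
    exact (hz₁.mul hz₂).limUnder_eq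
  · exact (tendsto_const_nhds : Tendsto (fun _ : Ξ => (1:ℂ)) (U : Filter Ξ) (nhds 1)).limUnder_eq
  · intro φ hφ
    exact (hφ.2.mono_left hUc).limUnder_eq
  · exact hUψ.limUnder_eq
end
end

section
/- Let Z be a compact Hausdorff topological space, D ⊆ Z a dense subset, K ⊆ Z a closed subset, and φ : Z → ℂ a continuous function. Then φ(K) = ⋂ {closure(φ(N ∩ D)) : N ⊆ Z closed with K ⊆ interior(N)}, the intersection being taken over all closed neighborhoods N of K in Z. -/
theorem image_closed_eq_iInter_closure_image_trace_on_dense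
    (Z : Type*) [TopologicalSpace Z] [CompactSpace Z] [T2Space Z]
    (D : Set Z) (hD : Dense D)
    (K : Set Z) (hK : IsClosed K)
    (φ : Z → ℂ) (hφ : Continuous φ) :
    φ '' K =
      ⋂₀ {S : Set ℂ | ∃ N : Set Z, IsClosed N ∧ K ⊆ interior N ∧
        S = closure (φ '' (N ∩ D))} := by
  apply Set.Subset.antisymm
  · rintro _ ⟨x, hxK, rfl⟩ S ⟨N, hN, hKN, rfl⟩
    have hx : x ∈ closure (interior N ∩ D) :=
      hD.open_subset_closure_inter isOpen_interior (hKN hxK)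
    have : φ x ∈ closure (φ '' (interior N ∩ D)) :=
      (image_closure_subset_closure_image hφ) ⟨x, hx, rfl⟩
    exact closure_mono (Set.image_mono (Set.inter_subset_inter_left _ interior_subset)) this
  · intro z hz
    by_contra hzK
    have hKc : IsClosed (φ '' K) := (hK.isCompact.image hφ).isClosed
    obtain ⟨ε, hε, hball⟩ := Metric.isOpen_iff.mp hKc.isOpen_compl z hzK
    set V : Set Z := φ ⁻¹' (Metric.closedBall z (ε / 2))ᶜ with hV
    have hVopen : IsOpen V := (Metric.isClosed_closedBall.isOpen_compl).preimage hφ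
    have hKV : K ⊆ V := by
      intro x hx
      simp only [hV, Set.mem_preimage, Set.mem_compl_iff, Metric.mem_closedBall, not_le]
      have : φ x ∉ Metric.ball z ε := fun h => hball h ⟨x, hx, rfl⟩
      simp only [Metric.mem_ball] at this
      have := not_lt.mp this
      rw [dist_comm] at this
      linarith
    obtain ⟨U, hUopen, hKU, hUV⟩ := normal_exists_closure_subset hK hVopen hKV
    have hzS : z ∈ closure (φ '' (closure U ∩ D)) := by
      apply hz
      exact ⟨closure U, isClosed_closure, hKU.trans (hUopen.subset_interior_iff.mpr subset_closure),
        rfl⟩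
    have hsub : closure (φ '' (closure U ∩ D)) ⊆ {c | ε / 2 ≤ dist c z} := by
      apply closure_minimal
      · rintro _ ⟨x, ⟨hxU, _⟩, rfl⟩
        have : x ∈ V := hUV hxU
        simp only [hV, Set.mem_preimage, Set.mem_compl_iff, Metric.mem_closedBall, not_le] at this
        exact le_of_lt this
      · exact isClosed_le continuous_const (continuous_id.dist continuous_const)
    have := hsub hzS
    simp only [Set.mem_setOf_eq, dist_self] at this
    linarith
end

section
/- Let Ξ be a Hausdorff locally compact abelian group (written multiplicatively) and let E ⊆ Ξ be nonempty. Define J_E := {ψ ∈ BC_u(Ξ) : for every ε > 0 there exists a compact set K ⊆ Ξ such that |ψ(ξ)| ≤ ε whenever ξ ∉ E·K}, where E·K := {ek : e ∈ E, k ∈ K}. Then J_E is a norm-closed, conjugation-closed, translation-invariant ideal of BC_u(Ξ) containing C_0(Ξ). Moreover, if E is not syndetic, i.e. E·K ≠ Ξ for every compact K ⊆ Ξ, then the constant function 1 does not belong to J_E, so J_E is a proper (non-unital) ideal. -/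
open Filter Pointwise

noncomputable section

/-- The ideal `J_E` of bounded uniformly continuous functions which are small outside
`E·K` for arbitrarily large compact sets `K`. -/
def JE {Ξ : Type*} [CommGroup Ξ] [UniformSpace Ξ] (E : Set Ξ) : Set (Ξ → ℂ) :=
  {ψ | BCu ψ ∧ ∀ ε > (0 : ℝ), ∃ K : Set Ξ, IsCompact K ∧ ∀ ξ : Ξ, ξ ∉ E * K → ‖ψ ξ‖ ≤ ε}

/-- boundedness of range in terms of norms -/
lemma bcu_bound {Ξ : Type*} [UniformSpace Ξ] {ψ : Ξ → ℂ} (h : BCu ψ) :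
    ∃ C : ℝ, 0 ≤ C ∧ ∀ ξ, ‖ψ ξ‖ ≤ C := by
  obtain ⟨C, hC⟩ := isBounded_iff_forall_norm_le.mp h.1
  refine ⟨max C 0, le_max_right _ _, fun ξ => le_trans (hC _ ⟨ξ, rfl⟩) (le_max_left _ _)⟩

lemma bound_isBounded {Ξ : Type*} {ψ : Ξ → ℂ} {C : ℝ} (h : ∀ ξ, ‖ψ ξ‖ ≤ C) :
    Bornology.IsBounded (Set.range ψ) :=
  isBounded_iff_forall_norm_le.mpr ⟨C, by rintro x ⟨ξ, rfl⟩; exact h ξ⟩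

lemma uc_iff {Ξ : Type*} [UniformSpace Ξ] {f : Ξ → ℂ} :
    UniformContinuous f ↔
      ∀ ε > (0 : ℝ), ∀ᶠ p : Ξ × Ξ in uniformity Ξ, dist (f p.1) (f p.2) < ε := by
  rw [UniformContinuous, Metric.uniformity_basis_dist.tendsto_right_iff]
  simp only [Set.mem_setOf_eq]

/-- product of bounded uniformly continuous functions is uniformly continuous -/
lemma uc_mul {Ξ : Type*} [UniformSpace Ξ] {φ j : Ξ → ℂ} (hφ : BCu φ) (hj : BCu j) :
    UniformContinuous (φ * j) := by
  obtain ⟨C, hC0, hC⟩ := bcu_bound hφ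
  obtain ⟨D, hD0, hD⟩ := bcu_bound hj
  rw [uc_iff]
  intro ε hε
  have hδ : (0 : ℝ) < ε / (C + D + 1) := by positivity
  filter_upwards [uc_iff.mp hφ.2 _ hδ, uc_iff.mp hj.2 _ hδ] with p h1 h2
  have key : dist (φ p.1 * j p.1) (φ p.2 * j p.2)
      ≤ ‖φ p.1‖ * dist (j p.1) (j p.2) + dist (φ p.1) (φ p.2) * ‖j p.2‖ := by
    calc dist (φ p.1 * j p.1) (φ p.2 * j p.2)
        ≤ dist (φ p.1 * j p.1) (φ p.1 * j p.2) + dist (φ p.1 * j p.2) (φ p.2 * j p.2) :=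
          dist_triangle _ _ _
      _ = ‖φ p.1‖ * dist (j p.1) (j p.2) + dist (φ p.1) (φ p.2) * ‖j p.2‖ := by
          simp only [dist_eq_norm]
          rw [← mul_sub, ← sub_mul, norm_mul, norm_mul]
  have hCD : C + D + 1 > 0 := by positivity
  calc dist (φ p.1 * j p.1) (φ p.2 * j p.2)
      ≤ ‖φ p.1‖ * dist (j p.1) (j p.2) + dist (φ p.1) (φ p.2) * ‖j p.2‖ := key
    _ ≤ C * (ε / (C + D + 1)) + (ε / (C + D + 1)) * D :=
        add_le_add (mul_le_mul (hC _) h2.le dist_nonneg hC0)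
          (mul_le_mul h1.le (hD _) (norm_nonneg _) hδ.le)
    _ < ε := by
        rw [div_eq_inv_mul]
        rw [show C * ((C + D + 1)⁻¹ * ε) + (C + D + 1)⁻¹ * ε * D
            = (C + D) * ((C + D + 1)⁻¹ * ε) by ring]
        have : (C + D) * ((C + D + 1)⁻¹ * ε) < (C + D + 1) * ((C + D + 1)⁻¹ * ε) :=
          mul_lt_mul_of_pos_right (by linarith) (by positivity)
        calc (C + D) * ((C + D + 1)⁻¹ * ε) < (C + D + 1) * ((C + D + 1)⁻¹ * ε) := this
          _ = ε := by field_simp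

theorem JE_is_admissible_ideal
    (Ξ : Type*) [CommGroup Ξ] [UniformSpace Ξ] [IsUniformGroup Ξ]
    [LocallyCompactSpace Ξ] [T2Space Ξ]
    (E : Set Ξ) (hE : E.Nonempty) :
    (∀ ψ ∈ JE E, BCu ψ) ∧
    (∀ ψ ∈ JE E, ∀ φ ∈ JE E, ψ + φ ∈ JE E) ∧
    (∀ (c : ℂ), ∀ ψ ∈ JE E, c • ψ ∈ JE E) ∧
    IsClosed {φ : BoundedContinuousFunction Ξ ℂ | ⇑φ ∈ JE E} ∧
    (∀ ψ ∈ JE E, (fun ξ => starRingEnd ℂ (ψ ξ)) ∈ JE E) ∧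
    (∀ ψ ∈ JE E, ∀ η : Ξ, tau η ψ ∈ JE E) ∧
    (∀ φ : Ξ → ℂ, BCu φ → ∀ j ∈ JE E, φ * j ∈ JE E) ∧
    (∀ φ : Ξ → ℂ, C0 φ → φ ∈ JE E) ∧
    ((∀ K : Set Ξ, IsCompact K → E * K ≠ Set.univ) → (1 : Ξ → ℂ) ∉ JE E) := by
  obtain ⟨e₀, he₀⟩ := hE
  refine ⟨fun ψ hψ => hψ.1, ?_, ?_, ?_, ?_, ?_, ?_, ?_, ?_⟩
  · -- addition
    rintro ψ ⟨⟨hb1, hu1⟩, hs1⟩ φ ⟨⟨hb2, hu2⟩, hs2⟩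
    obtain ⟨C, _, hC⟩ := bcu_bound ⟨hb1, hu1⟩
    obtain ⟨D, _, hD⟩ := bcu_bound ⟨hb2, hu2⟩
    refine ⟨⟨bound_isBounded (C := C + D) fun ξ => ?_, hu1.add hu2⟩, fun ε hε => ?_⟩
    · exact le_trans (norm_add_le _ _) (add_le_add (hC ξ) (hD ξ))
    · obtain ⟨K1, hK1, h1⟩ := hs1 (ε / 2) (by linarith)
      obtain ⟨K2, hK2, h2⟩ := hs2 (ε / 2) (by linarith)
      refine ⟨K1 ∪ K2, hK1.union hK2, fun ξ hξ => ?_⟩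
      have hξ1 : ξ ∉ E * K1 := fun h => hξ (Set.mul_subset_mul_left Set.subset_union_left h)
      have hξ2 : ξ ∉ E * K2 := fun h => hξ (Set.mul_subset_mul_left Set.subset_union_right h)
      calc ‖(ψ + φ) ξ‖ ≤ ‖ψ ξ‖ + ‖φ ξ‖ := norm_add_le _ _
        _ ≤ ε / 2 + ε / 2 := add_le_add (h1 ξ hξ1) (h2 ξ hξ2)
        _ = ε := by ring
  · -- scalar multiplication
    rintro c ψ ⟨⟨hb, hu⟩, hs⟩
    obtain ⟨C, _, hC⟩ := bcu_bound ⟨hb, hu⟩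
    refine ⟨⟨bound_isBounded (C := ‖c‖ * C) fun ξ => ?_, hu.const_smul c⟩, fun ε hε => ?_⟩
    · rw [Pi.smul_apply, norm_smul]; exact mul_le_mul_of_nonneg_left (hC ξ) (norm_nonneg c)
    · obtain ⟨K, hK, h⟩ := hs (ε / (‖c‖ + 1)) (by positivity)
      refine ⟨K, hK, fun ξ hξ => ?_⟩
      rw [Pi.smul_apply, norm_smul]
      calc ‖c‖ * ‖ψ ξ‖ ≤ ‖c‖ * (ε / (‖c‖ + 1)) := by
            exact mul_le_mul_of_nonneg_left (h ξ hξ) (norm_nonneg c)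
        _ ≤ (‖c‖ + 1) * (ε / (‖c‖ + 1)) :=
            mul_le_mul_of_nonneg_right (by linarith) (by positivity)
        _ = ε := by field_simp
  · -- closedness
    have : SequentialSpace (BoundedContinuousFunction Ξ ℂ) := by
      set_option synthInstance.maxHeartbeats 1000000 in infer_instance
    apply IsSeqClosed.isClosed
    intro x f hx hlim
    have hconv : TendstoUniformly (fun n => ⇑(x n)) (⇑f) atTop :=
      BoundedContinuousFunction.tendsto_iff_tendstoUniformly.mp hlim
    constructor
    · constructor
      · exact f.isBounded_range
      · rw [uc_iff]
        intro ε hε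
        obtain ⟨n, hn'⟩ := (hconv _
          (Metric.dist_mem_uniformity (show (0:ℝ) < ε/3 by linarith))).exists
        filter_upwards [uc_iff.mp (hx n).1.2 _ (show (0:ℝ) < ε/3 by linarith)] with p hp
        calc dist (f p.1) (f p.2)
            ≤ dist (f p.1) (x n p.1) + dist (x n p.1) (x n p.2) + dist (x n p.2) (f p.2) :=
              dist_triangle4 _ _ _ _
          _ < ε / 3 + ε / 3 + ε / 3 := by
              refine add_lt_add (add_lt_add (hn' p.1) hp) ?_
              rw [dist_comm]; exact hn' p.2
          _ = ε := by ring
    · intro ε hε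
      obtain ⟨n, hn⟩ := (hconv _
        (Metric.dist_mem_uniformity (show (0:ℝ) < ε/2 by linarith))).exists
      obtain ⟨K, hK, h⟩ := (hx n).2 (ε / 2) (by linarith)
      refine ⟨K, hK, fun ξ hξ => ?_⟩
      calc ‖f ξ‖ = ‖x n ξ + (f ξ - x n ξ)‖ := by ring_nf
        _ ≤ ‖x n ξ‖ + ‖f ξ - x n ξ‖ := norm_add_le _ _
        _ ≤ ε / 2 + ε / 2 := by
            refine add_le_add (h ξ hξ) ?_
            have := hn ξ
            simp only [Set.mem_setOf_eq, dist_comm, dist_eq_norm] at this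
            exact le_of_lt (by simpa [norm_sub_rev] using this)
        _ = ε := by ring
  · -- conjugation
    rintro ψ ⟨⟨hb, hu⟩, hs⟩
    obtain ⟨C, _, hC⟩ := bcu_bound ⟨hb, hu⟩
    refine ⟨⟨bound_isBounded (C := C) fun ξ => ?_, ?_⟩, ?_⟩
    · rw [RCLike.norm_conj]; exact hC ξ
    · rw [uc_iff]
      intro ε hε
      filter_upwards [uc_iff.mp hu _ hε] with p hp
      simpa [dist_eq_norm, ← map_sub, RCLike.norm_conj] using hp
    · intro ε hε
      obtain ⟨K, hK, h⟩ := hs ε hε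
      refine ⟨K, hK, fun ξ hξ => ?_⟩
      rw [RCLike.norm_conj]; exact h ξ hξ
  · -- translation
    rintro ψ ⟨⟨hb, hu⟩, hs⟩ η
    refine ⟨⟨hb.subset (by rintro x ⟨ξ, rfl⟩; exact ⟨ξ * η, rfl⟩),
      hu.comp (uniformContinuous_id.mul uniformContinuous_const)⟩, fun ε hε => ?_⟩
    obtain ⟨K, hK, h⟩ := hs ε hε
    refine ⟨K * {η⁻¹}, hK.mul isCompact_singleton, fun ξ hξ => ?_⟩
    apply h
    intro hmem
    apply hξ
    have : ξ = ξ * η * η⁻¹ := by group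
    rw [this, ← mul_assoc]
    exact Set.mul_mem_mul hmem rfl
  · -- ideal property
    rintro φ hφ j ⟨hj, hs⟩
    obtain ⟨C, hC0, hC⟩ := bcu_bound hφ
    obtain ⟨D, hD0, hD⟩ := bcu_bound hj
    refine ⟨⟨bound_isBounded (C := C * D) fun ξ => ?_, uc_mul hφ hj⟩, fun ε hε => ?_⟩
    · rw [Pi.mul_apply, norm_mul]; exact mul_le_mul (hC ξ) (hD ξ) (norm_nonneg _) hC0
    · obtain ⟨K, hK, h⟩ := hs (ε / (C + 1)) (by positivity)
      refine ⟨K, hK, fun ξ hξ => ?_⟩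
      rw [Pi.mul_apply, norm_mul]
      calc ‖φ ξ‖ * ‖j ξ‖ ≤ C * (ε / (C + 1)) :=
            mul_le_mul (hC ξ) (h ξ hξ) (norm_nonneg _) hC0
        _ ≤ (C + 1) * (ε / (C + 1)) :=
            mul_le_mul_of_nonneg_right (by linarith) (by positivity)
        _ = ε := by field_simp
  · -- C0 ⊆ JE
    rintro φ ⟨hcont, h0⟩
    have huc : UniformContinuous φ := hcont.uniformContinuous_of_tendsto_cocompact h0
    have hsmall : ∀ ε > (0 : ℝ), ∃ K : Set Ξ, IsCompact K ∧ ∀ ξ ∉ K, ‖φ ξ‖ ≤ ε := by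
      intro ε hε
      have := h0 (Metric.closedBall_mem_nhds (0 : ℂ) hε)
      rw [mem_map, mem_cocompact] at this
      obtain ⟨K, hK, hsub⟩ := this
      refine ⟨K, hK, fun ξ hξ => ?_⟩
      have := hsub hξ
      simpa [Metric.mem_closedBall, dist_eq_norm] using this
    have hbd : Bornology.IsBounded (Set.range φ) := by
      obtain ⟨K, hK, h1⟩ := hsmall 1 one_pos
      obtain ⟨C, hC⟩ := isBounded_iff_forall_norm_le.mp (hK.image hcont).isBounded
      refine bound_isBounded (C := max C 1) fun ξ => ?_
      by_cases hξ : ξ ∈ K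
      · exact le_trans (hC _ ⟨ξ, hξ, rfl⟩) (le_max_left _ _)
      · exact le_trans (h1 ξ hξ) (le_max_right _ _)
    refine ⟨⟨hbd, huc⟩, fun ε hε => ?_⟩
    obtain ⟨K, hK, h⟩ := hsmall ε hε
    refine ⟨{e₀⁻¹} * K, isCompact_singleton.mul hK, fun ξ hξ => ?_⟩
    apply h
    intro hmem
    apply hξ
    have : ξ = e₀ * (e₀⁻¹ * ξ) := by group
    rw [this]
    exact Set.mul_mem_mul he₀ (Set.mul_mem_mul rfl hmem)

  · -- non-syndetic ⇒ 1 ∉ JE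
    intro hsyn h1
    obtain ⟨K, hK, h⟩ := h1.2 (1 / 2) (by norm_num)
    obtain ⟨ξ, hξ⟩ := (Set.ne_univ_iff_exists_notMem _).mp (hsyn K hK)
    have := h ξ hξ
    simp only [Pi.one_apply, norm_one] at this
    linarith
end
end
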